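/- Fix δ > 0, and for each integer N ≥ 1 define f_N : [−2, ∞) → ℝ by f_N(x) = e^{N/2} N^{−(N+1)(1+δ/2)} (x+2)^{N+1} exp(−(x−1)²/(2N^{1+δ})). Then there exist C > 0 and N₀ such that for all N ≥ N₀, Σ_{j=0}^{∞} f_N(j) ≤ C N^{1/2 + 2δ/3}. -/

import Mathlib

open Real

/-- The function `f_N(x) = e^{N/2} N^{-(N+1)(1+δ/2)} (x+2)^{N+1} e^{-(x-1)²/(2N^{1+δ})}`. -/
noncomputable def fN (δ : ℝ) (N : ℕ) (x : ℝ) : ℝ :=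
  Real.exp (N / 2) * (N : ℝ) ^ (-(((N : ℝ) + 1) * (1 + δ / 2))) * (x + 2) ^ (N + 1) *
    Real.exp (-((x - 1) ^ 2 / (2 * (N : ℝ) ^ ((1 : ℝ) + δ))))

set_option maxHeartbeats 1000000 in
/-- For all large `N`, `Σ_{j≥0} f_N(j) ≤ C N^{1/2 + 2δ/3}`. -/
theorem stmt_15 (δ : ℝ) (hδ : 0 < δ) :
    ∃ C : ℝ, 0 < C ∧ ∃ N₀ : ℕ, ∀ N : ℕ, N₀ ≤ N →
      (∑' j : ℕ, fN δ N j) ≤ C * (N : ℝ) ^ ((1 : ℝ) / 2 + 2 * δ / 3) := by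
  refine ⟨4 * Real.exp 8, by positivity, 1, fun N hN => ?_⟩
  have hN1 : (1:ℝ) ≤ (N:ℝ) := by exact_mod_cast hN
  have hN0 : (0:ℝ) < (N:ℝ) := by linarith
  set s : ℝ := (N:ℝ) ^ ((1:ℝ) + δ) with hs_def
  set T : ℝ := (N:ℝ) ^ ((1:ℝ) + δ/2) with hT_def
  set σ : ℝ := (N:ℝ) ^ (((1:ℝ) + δ)/2) with hσ_def
  have hs : 0 < s := Real.rpow_pos_of_pos hN0 _
  have hT : 0 < T := Real.rpow_pos_of_pos hN0 _
  have hσ0 : 0 < σ := Real.rpow_pos_of_pos hN0 _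
  have hσ1 : 1 ≤ σ := Real.one_le_rpow hN1 (by positivity)
  have hσσ : σ * σ = s := by
    rw [hσ_def, hs_def, ← Real.rpow_add hN0,
      show ((1:ℝ) + δ)/2 + ((1:ℝ) + δ)/2 = (1:ℝ) + δ by ring]
  have hTN : (N:ℝ) ≤ T := by
    have := Real.rpow_le_rpow_of_exponent_le hN1 (by linarith : (1:ℝ) ≤ 1 + δ/2)
    simpa using this
  have hTT : T * T = (N:ℝ) * s := by
    rw [hT_def, hs_def, ← Real.rpow_add hN0,
      show (1:ℝ) + δ/2 + ((1:ℝ) + δ/2) = (1:ℝ) + ((1:ℝ) + δ) by ring,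
      Real.rpow_add hN0, Real.rpow_one]
  set b : ℝ := ((N:ℝ) + 1) / T with hb_def
  have hb : 0 < b := by positivity
  set c : ℝ := 1 + b * s with hc_def
  have hc0 : 0 < c := by positivity
  set m : ℕ := ⌈c⌉₊ with hm_def
  have hcm : c ≤ (m:ℝ) := Nat.le_ceil c
  have hmc : (m:ℝ) < c + 1 := Nat.ceil_lt_add_one hc0.le
  set r : ℝ := Real.exp (-(1/σ)) with hr_def
  have hr0 : 0 < r := Real.exp_pos _
  have hr1 : r < 1 := Real.exp_lt_one_iff.mpr (neg_lt_zero.mpr (by positivity))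
  -- Step 1: pointwise Gaussian bound
  have key : ∀ x : ℝ, 0 ≤ x → fN δ N x ≤ Real.exp (7 - (x - c)^2 / (2*s)) := by
    intro x hx
    have h1 : x + 2 ≤ T * Real.exp ((x - (T - 2))/T) := by
      have hu := Real.add_one_le_exp ((x - (T - 2))/T)
      have hxx : x + 2 = T * ((x - (T - 2))/T + 1) := by field_simp; ring
      rw [hxx]
      exact mul_le_mul_of_nonneg_left hu hT.le
    have h2 : (x + 2)^(N+1) ≤ T^(N+1) * Real.exp (((N:ℝ)+1) * ((x - (T - 2))/T)) := by
      calc (x + 2)^(N+1) ≤ (T * Real.exp ((x - (T - 2))/T))^(N+1) :=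
            pow_le_pow_left₀ (by linarith) h1 _
        _ = T^(N+1) * Real.exp ((x - (T - 2))/T)^(N+1) := by rw [mul_pow]
        _ = T^(N+1) * Real.exp (((N+1:ℕ):ℝ) * ((x - (T - 2))/T)) := by
            rw [← Real.exp_nat_mul]
        _ = T^(N+1) * Real.exp (((N:ℝ)+1) * ((x - (T - 2))/T)) := by push_cast; ring_nf
    have hTpow : (N:ℝ) ^ (-(((N:ℝ) + 1) * (1 + δ/2))) * T^(N+1) = 1 := by
      rw [hT_def, ← Real.rpow_natCast ((N:ℝ) ^ ((1:ℝ) + δ/2)) (N+1),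
        ← Real.rpow_mul hN0.le, ← Real.rpow_add hN0]
      rw [show -(((N:ℝ) + 1) * (1 + δ/2)) + ((1:ℝ) + δ/2) * ((N+1:ℕ):ℝ) = 0 by push_cast; ring]
      exact Real.rpow_zero _
    have hstep : fN δ N x ≤ Real.exp ((N:ℝ)/2 + ((N:ℝ)+1) * ((x - (T - 2))/T)
        - (x-1)^2/(2*s)) := by
      unfold fN
      rw [← hs_def]
      calc Real.exp ((N:ℝ)/2) * (N:ℝ) ^ (-(((N:ℝ) + 1) * (1 + δ/2))) * (x + 2)^(N+1) *
            Real.exp (-((x-1)^2/(2*s)))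
          ≤ Real.exp ((N:ℝ)/2) * (N:ℝ) ^ (-(((N:ℝ) + 1) * (1 + δ/2))) *
            (T^(N+1) * Real.exp (((N:ℝ)+1) * ((x - (T - 2))/T))) *
            Real.exp (-((x-1)^2/(2*s))) := by
            apply mul_le_mul_of_nonneg_right _ (Real.exp_pos _).le
            apply mul_le_mul_of_nonneg_left h2
            positivity
        _ = ((N:ℝ) ^ (-(((N:ℝ) + 1) * (1 + δ/2))) * T^(N+1)) *
            (Real.exp ((N:ℝ)/2) * Real.exp (((N:ℝ)+1) * ((x - (T - 2))/T)) *
             Real.exp (-((x-1)^2/(2*s)))) := by ring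
        _ = Real.exp ((N:ℝ)/2 + ((N:ℝ)+1) * ((x - (T - 2))/T) - (x-1)^2/(2*s)) := by
            rw [hTpow, one_mul, ← Real.exp_add, ← Real.exp_add]
            ring_nf
    refine hstep.trans (Real.exp_le_exp.mpr ?_)
    have hident : ((N:ℝ)+1) * ((x - (T - 2))/T) - (x-1)^2/(2*s)
        = (b*b*s/2 + b*(3 - T)) - (x - c)^2/(2*s) := by
      rw [hc_def, hb_def]
      field_simp
      ring
    rw [add_sub_assoc, hident]
    have hbT : b * T = (N:ℝ) + 1 := by rw [hb_def]; field_simp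
    have hbbs : b*b*s = ((N:ℝ)+1)^2 / (N:ℝ) := by
      rw [eq_div_iff hN0.ne']
      have hq : b*b*(T*T) = ((N:ℝ)+1)^2 := by
        rw [show b*b*(T*T) = (b*T)*(b*T) by ring, hbT]; ring
      linear_combination hq - b*b*hTT
    have hb3 : b*(3-T) ≤ 3*((N:ℝ)+1)/(N:ℝ) - ((N:ℝ)+1) := by
      rw [hb_def, show ((N:ℝ)+1)/T*(3-T) = 3*((N:ℝ)+1)/T - ((N:ℝ)+1) by field_simp]
      have : 3*((N:ℝ)+1)/T ≤ 3*((N:ℝ)+1)/(N:ℝ) :=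
        div_le_div_of_nonneg_left (by linarith) hN0 hTN
      linarith
    have e1 : ((N:ℝ)+1)^2/(N:ℝ) ≤ (N:ℝ) + 3 := by rw [div_le_iff₀ hN0]; nlinarith [hN1]
    have e2 : 3*((N:ℝ)+1)/(N:ℝ) ≤ 6 := by rw [div_le_iff₀ hN0]; linarith
    have hsum7 : (N:ℝ)/2 + (b*b*s/2 + b*(3-T)) ≤ 7 := by
      rw [hbbs]; linarith
    linarith
  -- Step 2: compare with geometric series
  set G : ℕ → ℝ := fun j => Real.exp 8 * (if j < m then r^(m-1-j) else r^(j-m)) with hG_def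
  have hrpow : ∀ k : ℕ, r^k = Real.exp (-((k:ℝ)/σ)) := by
    intro k
    rw [hr_def, ← Real.exp_nat_mul]
    congr 1
    field_simp
  have hFG : ∀ j : ℕ, fN δ N j ≤ G j := by
    intro j
    have h1 := key j (Nat.cast_nonneg j)
    have h2 : Real.exp (7 - ((j:ℝ) - c)^2/(2*s)) ≤ Real.exp 8 * Real.exp (-(|(j:ℝ) - c|/σ)) := by
      rw [← Real.exp_add]
      apply Real.exp_le_exp.mpr
      have hsq := sq_nonneg (|(j:ℝ) - c|/σ - 1)
      have habs : |(j:ℝ) - c|^2 = ((j:ℝ) - c)^2 := sq_abs _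
      have hs2 : σ^2 = s := by rw [sq]; exact hσσ
      have hkey : |(j:ℝ) - c|/σ - 1/2 ≤ ((j:ℝ) - c)^2/(2*s) := by
        rw [← hs2]
        have hσne : σ ≠ 0 := hσ0.ne'
        have expand : (|(j:ℝ) - c|/σ - 1)^2 = ((j:ℝ) - c)^2/σ^2 - 2*(|(j:ℝ) - c|/σ) + 1 := by
          field_simp
          ring_nf
          rw [sq_abs]
          ring
        rw [show ((j:ℝ) - c)^2/(2*σ^2) = (((j:ℝ) - c)^2/σ^2)/2 by ring]
        linarith [hsq, expand]
      linarith
    have h3 : Real.exp (-(|(j:ℝ) - c|/σ)) ≤ (if j < m then r^(m-1-j) else r^(j-m)) := by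
      split_ifs with hj
      · rw [hrpow]
        apply Real.exp_le_exp.mpr
        apply neg_le_neg
        have hk : ((m-1-j:ℕ):ℝ) ≤ |(j:ℝ) - c| := by
          rw [Nat.cast_sub (by omega : j ≤ m - 1), Nat.cast_sub (by omega : 1 ≤ m),
            Nat.cast_one]
          calc (m:ℝ) - 1 - j ≤ c - j := by linarith [hmc]
            _ ≤ |c - (j:ℝ)| := le_abs_self _
            _ = |(j:ℝ) - c| := abs_sub_comm _ _
        gcongr
      · rw [hrpow]
        apply Real.exp_le_exp.mpr
        apply neg_le_neg
        have hk : ((j-m:ℕ):ℝ) ≤ |(j:ℝ) - c| := by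
          rw [Nat.cast_sub (by omega : m ≤ j)]
          calc (j:ℝ) - m ≤ (j:ℝ) - c := by linarith [hcm]
            _ ≤ |(j:ℝ) - c| := le_abs_self _
        gcongr
    calc fN δ N j ≤ Real.exp (7 - ((j:ℝ) - c)^2/(2*s)) := h1
      _ ≤ Real.exp 8 * Real.exp (-(|(j:ℝ) - c|/σ)) := h2
      _ ≤ Real.exp 8 * (if j < m then r^(m-1-j) else r^(j-m)) := by
          apply mul_le_mul_of_nonneg_left h3 (Real.exp_pos _).le
  -- Step 3: sum the majorant
  have hG0 : ∀ j, 0 ≤ G j := by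
    intro j; simp only [hG_def]; split_ifs <;> positivity
  have hF0 : ∀ j : ℕ, 0 ≤ fN δ N j := by
    intro j; unfold fN; positivity
  have hGshift : ∀ j : ℕ, G (j + m) = Real.exp 8 * r^j := by
    intro j
    simp only [hG_def]
    rw [if_neg (by omega : ¬ (j + m < m))]
    congr 2
    omega
  have hgeo : Summable (fun j : ℕ => r^j) := summable_geometric_of_lt_one hr0.le hr1
  have hGsum : Summable G := by
    apply (summable_nat_add_iff m).mp
    have hEq : (fun j : ℕ => G (j+m)) = fun j => Real.exp 8 * r^j := funext hGshift
    rw [hEq]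
    exact hgeo.mul_left _
  have hFsum : Summable (fun j : ℕ => fN δ N j) := Summable.of_nonneg_of_le hF0 hFG hGsum
  have htsum : ∑' j : ℕ, fN δ N j ≤ ∑' j, G j := Summable.tsum_le_tsum hFG hFsum hGsum
  have hsplit : ∑' j, G j = (∑ i ∈ Finset.range m, G i) + ∑' i, G (i+m) :=
    (Summable.sum_add_tsum_nat_add m hGsum).symm
  have hgeosum : ∑' j : ℕ, r^j = (1-r)⁻¹ := tsum_geometric_of_lt_one hr0.le hr1
  have hpart1 : (∑ i ∈ Finset.range m, G i) ≤ Real.exp 8 * (1-r)⁻¹ := by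
    have hc1 : ∀ i ∈ Finset.range m, G i = Real.exp 8 * r^(m-1-i) := by
      intro i hi; simp only [hG_def]; rw [if_pos (Finset.mem_range.mp hi)]
    rw [Finset.sum_congr rfl hc1, ← Finset.mul_sum]
    apply mul_le_mul_of_nonneg_left _ (Real.exp_pos 8).le
    rw [Finset.sum_range_reflect (fun i => r^i) m]
    calc ∑ i ∈ Finset.range m, r^i ≤ ∑' i : ℕ, r^i :=
          Summable.sum_le_tsum _ (fun i _ => by positivity) hgeo
      _ = (1-r)⁻¹ := hgeosum
  have hpart2 : ∑' i : ℕ, G (i+m) = Real.exp 8 * (1-r)⁻¹ := by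
    rw [tsum_congr hGshift, tsum_mul_left, hgeosum]
  -- bound (1-r)⁻¹ by 2σ
  have hexp1 : 1/σ + 1 ≤ Real.exp (1/σ) := Real.add_one_le_exp _
  have hrle : r ≤ (1/σ + 1)⁻¹ := by
    rw [hr_def, Real.exp_neg]
    exact inv_anti₀ (by positivity) hexp1
  have hkey2 : (1/σ + 1)⁻¹ ≤ 1 - 1/(2*σ) := by
    have heq : (1/σ + 1)⁻¹ = σ/(σ+1) := by
      rw [inv_eq_one_div]
      field_simp
      ring
    rw [heq, div_le_iff₀ (by positivity : (0:ℝ) < σ + 1)]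
    have hss : (1/(2*σ))*σ = 1/2 := by field_simp
    have hhalf : 1/(2*σ) ≤ 1/2 := by
      apply one_div_le_one_div_of_le (by norm_num) (by linarith)
    nlinarith [hss, hhalf, hσ1]
  have h1r : 1/(2*σ) ≤ 1 - r := by linarith
  have hinv : (1-r)⁻¹ ≤ 2*σ := by
    have h1r0 : (0:ℝ) < 1/(2*σ) := by positivity
    have h2 := one_div_le_one_div_of_le h1r0 h1r
    rw [one_div_one_div] at h2
    rw [inv_eq_one_div]
    exact h2
  calc ∑' j : ℕ, fN δ N j ≤ ∑' j, G j := htsum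
    _ = (∑ i ∈ Finset.range m, G i) + ∑' i, G (i+m) := hsplit
    _ ≤ Real.exp 8 * (1-r)⁻¹ + Real.exp 8 * (1-r)⁻¹ := by rw [hpart2]; linarith [hpart1]
    _ = 2 * Real.exp 8 * (1-r)⁻¹ := by ring
    _ ≤ 2 * Real.exp 8 * (2*σ) := by
        apply mul_le_mul_of_nonneg_left hinv (by positivity)
    _ = 4 * Real.exp 8 * σ := by ring
    _ ≤ 4 * Real.exp 8 * (N:ℝ)^((1:ℝ)/2 + 2*δ/3) := by
        apply mul_le_mul_of_nonneg_left _ (by positivity)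
        rw [hσ_def]
        exact Real.rpow_le_rpow_of_exponent_le hN1 (by linarith)
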